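/- If C is a proper convex subset of Z_p^n (i.e., C ≠ Z_p^n and C is empty or a coset of a Z_p-submodule of Q_p^n contained in Z_p^n), then there exists a closed ball of radius 1/p in Z_p^n (that is, a coset x + p·Z_p^n with x ∈ Z_p^n) which is disjoint from C. -/

import Mathlib

/-- A subset of a `ℚ_[p]`-vector space is convex if it is empty or a coset of a
`ℤ_[p]`-submodule. -/
def PadicConvex (p : ℕ) [Fact p.Prime] {V : Type*} [AddCommGroup V]
    [Module ℚ_[p] V] [Module ℤ_[p] V] [IsScalarTower ℤ_[p] ℚ_[p] V]
    (C : Set V) : Prop :=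
  C = ∅ ∨ ∃ (L : Submodule ℤ_[p] V) (u : V), C = (· + u) '' (L : Set V)

theorem proper_convex_disjoint_ball (p : ℕ) [Fact p.Prime] (n : ℕ)
    (C : Set (Fin n → ℚ_[p]))
    (hsub : C ⊆ {x | ∀ i, ‖x i‖ ≤ 1})
    (hne : C ≠ {x | ∀ i, ‖x i‖ ≤ 1})
    (hconv : PadicConvex p C) :
    ∃ v : Fin n → ℚ_[p], (∀ i, ‖v i‖ ≤ 1) ∧
      {y : Fin n → ℚ_[p] | ∀ i, ‖y i - v i‖ ≤ (p : ℝ)⁻¹} ∩ C = ∅ := by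
  rcases hconv with hC | ⟨L, u, hC⟩
  · exact ⟨0, fun i => by simp, by simp [hC]⟩
  -- the unit polydisc as a ℤ_[p]-submodule
  set S : Submodule ℤ_[p] (Fin n → ℚ_[p]) :=
    Submodule.pi Set.univ (fun _ => Submodule.span ℤ_[p] ({1} : Set ℚ_[p])) with hS
  have hmem1 : ∀ x : ℚ_[p], x ∈ Submodule.span ℤ_[p] ({1} : Set ℚ_[p]) ↔ ‖x‖ ≤ 1 := by
    intro x
    rw [Submodule.mem_span_singleton]
    constructor
    · rintro ⟨a, rfl⟩
      rw [Algebra.smul_def, PadicInt.algebraMap_apply, mul_one]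
      exact a.2
    · intro hx
      obtain ⟨a, ha⟩ : ∃ a : ℤ_[p], (a : ℚ_[p]) = x := ⟨⟨x, hx⟩, rfl⟩
      exact ⟨a, by rw [Algebra.smul_def, PadicInt.algebraMap_apply, mul_one, ha]⟩
  have hmemS : ∀ x : Fin n → ℚ_[p], x ∈ S ↔ ∀ i, ‖x i‖ ≤ 1 := by
    intro x
    rw [hS, Submodule.mem_pi]
    constructor
    · intro h i; exact (hmem1 (x i)).1 (h i trivial)
    · intro h i _; exact (hmem1 (x i)).2 (h i)
  have hSfg : S.FG := Submodule.fg_pi (fun i => Submodule.fg_span_singleton _)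
  set I : Ideal ℤ_[p] := Ideal.span {(p : ℤ_[p])} with hI
  have hu : u ∈ C := hC ▸ ⟨0, L.zero_mem, by simp⟩
  have huS : u ∈ S := (hmemS u).2 (hsub hu)
  -- find z in the polydisc not in C
  have hzex : ∃ z, z ∈ S ∧ z ∉ C := by
    by_contra h
    push_neg at h
    exact hne (Set.Subset.antisymm hsub (fun z hz => h z ((hmemS z).2 hz)))
  obtain ⟨z, hzS, hzC⟩ := hzex
  have hzL : z - u ∉ L := fun h => hzC (hC ▸ ⟨z - u, h, by simp⟩)
  have hzuS : z - u ∈ S := S.sub_mem hzS huS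
  -- Nakayama: S is not contained in L ⊔ I • S
  have hnak : ¬ S ≤ L ⊔ I • S := by
    intro hle
    have hjac : I ≤ Ideal.jacobson ⊥ := by
      rw [IsLocalRing.jacobson_eq_maximalIdeal ⊥ bot_ne_top,
        PadicInt.maximalIdeal_eq_span_p]
    exact hzL (Submodule.le_of_le_smul_of_le_jacobson_bot hSfg hjac hle hzuS)
  rw [SetLike.not_le_iff_exists] at hnak
  obtain ⟨w, hwS, hw⟩ := hnak
  refine ⟨w + u, ?_, ?_⟩
  · intro i
    calc ‖w i + u i‖ ≤ max ‖w i‖ ‖u i‖ := Padic.nonarchimedean _ _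
      _ ≤ 1 := max_le ((hmemS w).1 hwS i) ((hmemS u).1 huS i)
  · ext y
    simp only [Set.mem_inter_iff, Set.mem_setOf_eq, Set.mem_empty_iff_false, iff_false,
      not_and]
    intro hball hyC
    obtain ⟨l, hlL, rfl⟩ : ∃ l ∈ L, l + u = y := by
      rw [hC] at hyC; obtain ⟨l, hl, hly⟩ := hyC; exact ⟨l, hl, hly⟩
    -- y - v = l - w ∈ p • S
    have hps : l - w ∈ I • S := by
      rw [hI, Submodule.ideal_span_singleton_smul]
      have hp0 : (p : ℚ_[p]) ≠ 0 := by
        exact_mod_cast (Nat.cast_ne_zero (R := ℚ_[p])).2 (Fact.out : p.Prime).ne_zero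
      refine ⟨fun i => (l i - w i) / (p : ℚ_[p]), ?_, ?_⟩
      · refine (hmemS _).2 fun i => ?_
        have hpos : (0:ℝ) < (p:ℝ) := by exact_mod_cast (Fact.out : p.Prime).pos
        have hnb : ‖l i - w i‖ ≤ (p : ℝ)⁻¹ := by
          have h3 := hball i
          have h4 : (l + u) i - (w + u) i = l i - w i := by
            show l i + u i - (w i + u i) = l i - w i
            ring
          rwa [h4] at h3
        rw [norm_div, Padic.norm_p]
        rw [div_le_one (by positivity)]
        simpa using hnb
      · funext i
        show ((p : ℤ_[p]) • ((l i - w i) / (p : ℚ_[p])) : ℚ_[p]) = l i - w i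
        rw [Algebra.smul_def, PadicInt.algebraMap_apply]
        push_cast
        field_simp
    have : w ∈ L ⊔ I • S := by
      have h2 := Submodule.sub_mem _ (Submodule.mem_sup_left hlL)
        (Submodule.mem_sup_right hps)
      simpa using h2
    exact hw this
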